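/- For an n×n symmetric matrix S with independent entries s_{ij} = s_{ji} for i ≤ j, treating det S as a polynomial in the variables (s_{ik})_{i≤k}, one has for all 1 ≤ i, j ≤ n: ∑_{k=1}^n (1 + δ_{ik}) s_{jk} · ∂(det S)/∂s_{ik} = 2 δ_{ij} · det S, where ∂(det S)/∂s_{ik} with i > k is interpreted as ∂(det S)/∂s_{ki}. -/

import Mathlib

open MvPolynomial Matrix

private lemma pderiv_finset_prod {σ : Type*} [DecidableEq σ] (v : σ) {α : Type*} [DecidableEq α]
    (s : Finset α) (f : α → MvPolynomial σ ℚ) :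
    pderiv v (∏ a ∈ s, f a) = ∑ a ∈ s, pderiv v (f a) * ∏ b ∈ s.erase a, f b := by
  induction s using Finset.induction_on with
  | empty => simp
  | @insert a s h ih =>
    rw [Finset.prod_insert h, pderiv_mul, ih, Finset.sum_insert h, Finset.erase_insert h,
      Finset.mul_sum]
    congr 1
    apply Finset.sum_congr rfl
    intro b hb
    have hba : b ≠ a := fun hba => h (hba ▸ hb)
    rw [Finset.erase_insert_of_ne hba.symm,
      Finset.prod_insert (fun ha => h (Finset.mem_of_mem_erase ha))]
    ring

private lemma pderiv_det {σ : Type*} [DecidableEq σ] (v : σ) {n : ℕ}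
    (M : Matrix (Fin n) (Fin n) (MvPolynomial σ ℚ)) :
    pderiv v M.det = ∑ r, (M.updateRow r fun b => pderiv v (M r b)).det := by
  simp_rw [det_apply']
  rw [map_sum, Finset.sum_comm]
  apply Finset.sum_congr rfl
  intro σ' _
  have hc : pderiv v (((Equiv.Perm.sign σ' : ℤ) : MvPolynomial σ ℚ)) = 0 := by
    rw [← map_intCast (C : ℚ →+* MvPolynomial σ ℚ), pderiv_C]
  rw [pderiv_mul, hc, zero_mul, zero_add, pderiv_finset_prod, Finset.mul_sum]
  rw [← Equiv.sum_comp σ' (fun r => ((Equiv.Perm.sign σ' : ℤ) : MvPolynomial σ ℚ) *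
      ∏ a, (M.updateRow r fun b => pderiv v (M r b)) (σ' a) a)]
  apply Finset.sum_congr rfl
  intro a _
  congr 1
  rw [← Finset.mul_prod_erase Finset.univ
      (fun b => (M.updateRow (σ' a) fun c => pderiv v (M (σ' a) c)) (σ' b) b)
      (Finset.mem_univ a)]
  rw [updateRow_self]
  congr 1
  apply Finset.prod_congr rfl
  intro b hb
  rw [updateRow_ne]
  exact fun hba => (Finset.ne_of_mem_erase hb) (σ'.injective hba)

/-- Laplace-expansion identity for a symmetric `n × n` matrix whose independent
upper-triangular entries are polynomial variables (indexed by unordered pairs):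
`∑ k, (1 + δ_{ik}) s_{jk} ∂(det S)/∂s_{ik} = 2 δ_{ij} det S`. -/
theorem laplace_expansion_symmetric_matrix (n : ℕ) (i j : Fin n) :
    ∑ k : Fin n,
        ((1 : MvPolynomial (Sym2 (Fin n)) ℚ) + if i = k then 1 else 0) *
          X (Sym2.mk j k) *
          pderiv (Sym2.mk i k)
            (Matrix.det (Matrix.of fun a b : Fin n =>
              (X (Sym2.mk a b) : MvPolynomial (Sym2 (Fin n)) ℚ)))
      = 2 * (if i = j then (1 : MvPolynomial (Sym2 (Fin n)) ℚ) else 0) *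
          Matrix.det (Matrix.of fun a b : Fin n =>
            (X (Sym2.mk a b) : MvPolynomial (Sym2 (Fin n)) ℚ)) := by
  classical
  set S : Matrix (Fin n) (Fin n) (MvPolynomial (Sym2 (Fin n)) ℚ) :=
    Matrix.of fun a b : Fin n => X (Sym2.mk a b) with hSdef
  have hSapp : ∀ a b : Fin n, S a b = X (Sym2.mk a b) := fun a b => rfl
  have hSt : Sᵀ = S :=
    Matrix.ext fun a b =>
      congrArg (fun e => (X e : MvPolynomial (Sym2 (Fin n)) ℚ)) Sym2.eq_swap
  have hadj : ∀ a b : Fin n, Matrix.adjugate S a b = Matrix.adjugate S b a := by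
    intro a b
    conv_lhs => rw [← hSt, ← Matrix.adjugate_transpose, Matrix.transpose_apply]
  -- per-row determinant computation
  have hrow : ∀ i k r : Fin n,
      (S.updateRow r fun b => pderiv (Sym2.mk i k) (S r b)).det =
        (if r = i then Matrix.adjugate S k i else 0) +
          (if r = k then (if i = k then 0 else Matrix.adjugate S i k) else 0) := by
    intro i k r
    by_cases hri : r = i
    · subst hri
      have hrowfun : (fun b => pderiv (Sym2.mk r k) (S r b))
          = (Pi.single k 1 : Fin n → MvPolynomial (Sym2 (Fin n)) ℚ) := by
        funext b
        rw [hSapp, pderiv_X, Pi.single_apply, Pi.single_apply]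
        by_cases hbk : b = k
        · subst hbk
          simp only [eq_self_iff_true, if_true]
        · rw [if_neg hbk, if_neg]
          intro h
          rcases Sym2.eq_iff.mp h with ⟨_, h2⟩ | ⟨h1, h2⟩
          · exact hbk h2
          · exact hbk (h2.trans h1)
      rw [hrowfun, ← Matrix.adjugate_apply, if_pos rfl]
      by_cases hrk : r = k
      · rw [if_pos hrk, if_pos (hrk.symm ▸ rfl : r = k), add_zero]
      · rw [if_neg hrk, add_zero]
    · by_cases hrk : r = k
      · subst hrk
        have hrowfun : (fun b => pderiv (Sym2.mk i r) (S r b))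
            = (Pi.single i 1 : Fin n → MvPolynomial (Sym2 (Fin n)) ℚ) := by
          funext b
          rw [hSapp, pderiv_X, Pi.single_apply, Pi.single_apply]
          by_cases hbi : b = i
          · subst hbi; rw [if_pos rfl, if_pos (by rw [Sym2.eq_swap])]
          · rw [if_neg hbi, if_neg]
            intro h
            rcases Sym2.eq_iff.mp h with ⟨h1, h2⟩ | ⟨h1, h2⟩
            · exact hri h1
            · exact hbi h2
        rw [hrowfun, ← Matrix.adjugate_apply, if_neg hri, if_pos rfl, if_neg (fun h => hri h.symm),
          zero_add]
      · have hrowfun : ∀ b : Fin n, pderiv (Sym2.mk i k) (S r b) = 0 := by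
          intro b
          rw [hSapp, pderiv_X, Pi.single_apply, if_neg]
          intro h
          rcases Sym2.eq_iff.mp h with ⟨h1, _⟩ | ⟨h1, _⟩
          · exact hri h1
          · exact hrk h1
        have hz : ∀ b, S.updateRow r (fun b => pderiv (Sym2.mk i k) (S r b)) r b = 0 := by
          intro b
          rw [Matrix.updateRow_self]
          exact hrowfun b
        rw [Matrix.det_eq_zero_of_row_eq_zero r hz, if_neg hri, if_neg hrk, add_zero]
  -- the derivative of the determinant
  have hder : ∀ i k : Fin n, pderiv (Sym2.mk i k) S.det
      = Matrix.adjugate S k i + (if i = k then 0 else Matrix.adjugate S i k) := by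
    intro i k
    rw [pderiv_det]
    simp_rw [hrow i k]
    rw [Finset.sum_add_distrib, Finset.sum_ite_eq' Finset.univ i, Finset.sum_ite_eq' Finset.univ k]
    simp
  -- each term equals 2 * S j k * adjugate S k i
  have hterm : ∀ k : Fin n,
      ((1 : MvPolynomial (Sym2 (Fin n)) ℚ) + if i = k then 1 else 0) *
          X (Sym2.mk j k) * pderiv (Sym2.mk i k) S.det
        = 2 * (S j k * Matrix.adjugate S k i) := by
    intro k
    rw [hder i k, hSapp]
    by_cases hik : i = k
    · subst hik; rw [if_pos rfl, if_pos rfl, add_zero]; ring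
    · rw [if_neg hik, if_neg hik, hadj i k]
      ring
  calc ∑ k : Fin n, ((1 : MvPolynomial (Sym2 (Fin n)) ℚ) + if i = k then 1 else 0) *
          X (Sym2.mk j k) * pderiv (Sym2.mk i k) S.det
      = ∑ k : Fin n, 2 * (S j k * Matrix.adjugate S k i) := Finset.sum_congr rfl fun k _ => hterm k
    _ = 2 * ((S * Matrix.adjugate S) j i) := by rw [Matrix.mul_apply, ← Finset.mul_sum]
    _ = 2 * (if i = j then (1 : MvPolynomial (Sym2 (Fin n)) ℚ) else 0) * S.det := by
        rw [Matrix.mul_adjugate]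
        simp only [Matrix.smul_apply, Matrix.one_apply, smul_eq_mul]
        by_cases hij : i = j
        · subst hij; ring
        · rw [if_neg (fun h : j = i => hij h.symm), if_neg hij]; ring
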